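/- Let H = H₊ ⊕ H₋ be a polarized Hilbert space, and let A be a bounded invertible operator on H with block decomposition A = [[a, b], [c, d]] such that b and c are Hilbert-Schmidt. Then the off-diagonal blocks of A⁻¹ are also Hilbert-Schmidt operators. Consequently the set GL_HS(H) of invertible bounded operators with Hilbert-Schmidt off-diagonal blocks is a group under composition. -/

import Mathlib

open Module

/-- A continuous linear map between complex inner product spaces is Hilbert–Schmidt if
`∑ ‖T eᵢ‖² < ∞` for some Hilbert (orthonormal) basis `(eᵢ)`. -/
def IsHilbertSchmidt {E F : Type*} [NormedAddCommGroup E] [InnerProductSpace ℂ E]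
    [NormedAddCommGroup F] [InnerProductSpace ℂ F] (T : E →L[ℂ] F) : Prop :=
  ∃ (ι : Type) (b : HilbertBasis ι ℂ E), Summable (fun i => ‖T (b i)‖ ^ 2)

noncomputable section HSAux

open scoped ENNReal NNReal

local notation "⟪" x ", " y "⟫" => @inner ℂ _ _ x y

variable {E F G : Type} [NormedAddCommGroup E] [InnerProductSpace ℂ E]
  [NormedAddCommGroup F] [InnerProductSpace ℂ F]
  [NormedAddCommGroup G] [InnerProductSpace ℂ G]

lemma hasSum_inner_normSq {ι : Type*} (f : HilbertBasis ι ℂ F) (x : F) :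
    HasSum (fun j => ‖⟪f j, x⟫‖ ^ 2) (‖x‖ ^ 2) := by
  have h := (f.hasSum_inner_mul_inner x x).mapL Complex.reCLM
  have e1 : ∀ j, Complex.reCLM (⟪x, f j⟫ * ⟪f j, x⟫) = ‖⟪f j, x⟫‖ ^ 2 := by
    intro j
    rw [← inner_conj_symm x (f j), ← Complex.normSq_eq_conj_mul_self]
    simp [Complex.normSq_eq_norm_sq, ← Complex.ofReal_pow]
  have e2 : Complex.reCLM ⟪x, x⟫ = ‖x‖ ^ 2 := by
    simpa using inner_self_eq_norm_sq (𝕜 := ℂ) x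
  rw [e2] at h
  simpa only [e1] using h

lemma ennreal_parseval {ι : Type*} (f : HilbertBasis ι ℂ F) (x : F) :
    (‖x‖₊ : ℝ≥0∞) ^ 2 = ∑' j, (‖⟪f j, x⟫‖₊ : ℝ≥0∞) ^ 2 := by
  have h := hasSum_inner_normSq f x
  have h1 : ENNReal.ofReal (∑' j, ‖⟪f j, x⟫‖ ^ 2) = ∑' j, ENNReal.ofReal (‖⟪f j, x⟫‖ ^ 2) :=
    ENNReal.ofReal_tsum_of_nonneg (fun j => sq_nonneg _) h.summable
  rw [h.tsum_eq] at h1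
  calc (‖x‖₊ : ℝ≥0∞) ^ 2 = ENNReal.ofReal (‖x‖ ^ 2) := by
        rw [ENNReal.ofReal_pow (norm_nonneg x), ofReal_norm, enorm_eq_nnnorm]
    _ = _ := by
        rw [h1]
        exact tsum_congr fun j => by
          rw [ENNReal.ofReal_pow (norm_nonneg _), ofReal_norm, enorm_eq_nnnorm]

lemma ensum_eq_adjoint [CompleteSpace E] [CompleteSpace F] (T : E →L[ℂ] F)
    {ι κ : Type*} (e : HilbertBasis ι ℂ E) (f : HilbertBasis κ ℂ F) :
    ∑' i, (‖T (e i)‖₊ : ℝ≥0∞) ^ 2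
      = ∑' j, (‖(ContinuousLinearMap.adjoint T) (f j)‖₊ : ℝ≥0∞) ^ 2 := by
  have key : ∀ (j : κ) (i : ι),
      (‖⟪f j, T (e i)⟫‖₊ : ℝ≥0∞) = (‖⟪e i, (ContinuousLinearMap.adjoint T) (f j)⟫‖₊ : ℝ≥0∞) := by
    intro j i
    have h1 : ‖⟪f j, T (e i)⟫‖ = ‖⟪e i, (ContinuousLinearMap.adjoint T) (f j)⟫‖ := by
      rw [← ContinuousLinearMap.adjoint_inner_left T (e i) (f j)]
      exact norm_inner_symm _ _
    congr 1
    exact NNReal.coe_injective (by simpa [coe_nnnorm] using h1)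
  calc ∑' i, (‖T (e i)‖₊ : ℝ≥0∞) ^ 2
      = ∑' i, ∑' j, (‖⟪f j, T (e i)⟫‖₊ : ℝ≥0∞) ^ 2 := tsum_congr fun i => ennreal_parseval f _
    _ = ∑' j, ∑' i, (‖⟪f j, T (e i)⟫‖₊ : ℝ≥0∞) ^ 2 := ENNReal.tsum_comm
    _ = ∑' j, ∑' i, (‖⟪e i, (ContinuousLinearMap.adjoint T) (f j)⟫‖₊ : ℝ≥0∞) ^ 2 :=
        tsum_congr fun j => tsum_congr fun i => by rw [key j i]
    _ = ∑' j, (‖(ContinuousLinearMap.adjoint T) (f j)‖₊ : ℝ≥0∞) ^ 2 :=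
        tsum_congr fun j => (ennreal_parseval e _).symm

lemma ensum_basis_indep [CompleteSpace E] [CompleteSpace F] (T : E →L[ℂ] F)
    {ι ι' : Type*} (e : HilbertBasis ι ℂ E) (e' : HilbertBasis ι' ℂ E) :
    ∑' i, (‖T (e i)‖₊ : ℝ≥0∞) ^ 2 = ∑' i, (‖T (e' i)‖₊ : ℝ≥0∞) ^ 2 := by
  obtain ⟨w, f, -⟩ := exists_hilbertBasis ℂ F
  rw [ensum_eq_adjoint T e f, ensum_eq_adjoint T e' f]

lemma summable_normSq_iff {ι : Type*} (g : ι → F) :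
    Summable (fun i => ‖g i‖ ^ 2) ↔ ∑' i, (‖g i‖₊ : ℝ≥0∞) ^ 2 ≠ ∞ := by
  have h : (fun i => ‖g i‖ ^ 2) = fun i => ((‖g i‖₊ ^ 2 : ℝ≥0) : ℝ) := by
    funext i; push_cast; rfl
  rw [h, NNReal.summable_coe, ← ENNReal.tsum_coe_ne_top_iff_summable]
  simp [ENNReal.coe_pow]

lemma isHilbertSchmidt_iff_ensum [CompleteSpace E] [CompleteSpace F]
    (T : E →L[ℂ] F) {ι : Type*} (e : HilbertBasis ι ℂ E) :
    IsHilbertSchmidt T ↔ ∑' i, (‖T (e i)‖₊ : ℝ≥0∞) ^ 2 ≠ ∞ := by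
  constructor
  · rintro ⟨ι', e', h⟩
    rw [ensum_basis_indep T e e']
    exact (summable_normSq_iff fun i => T (e' i)).mp h
  · intro h
    obtain ⟨w, e', -⟩ := exists_hilbertBasis ℂ E
    refine ⟨w, e', ?_⟩
    rw [summable_normSq_iff (fun i => T (e' i)), ensum_basis_indep T e' e]
    exact h

lemma IsHilbertSchmidt.summable_basis [CompleteSpace E] [CompleteSpace F] {T : E →L[ℂ] F}
    (h : IsHilbertSchmidt T) {ι : Type*} (e : HilbertBasis ι ℂ E) :
    Summable fun i => ‖T (e i)‖ ^ 2 :=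
  (summable_normSq_iff fun i => T (e i)).mpr ((isHilbertSchmidt_iff_ensum T e).mp h)

lemma IsHilbertSchmidt.comp_left {T : E →L[ℂ] F}
    (hT : IsHilbertSchmidt T) (S : F →L[ℂ] G) : IsHilbertSchmidt (S.comp T) := by
  obtain ⟨ι, e, h⟩ := hT
  refine ⟨ι, e, ?_⟩
  refine Summable.of_nonneg_of_le (fun i => sq_nonneg _) (fun i => ?_) (h.mul_left (‖S‖ ^ 2))
  calc ‖(S.comp T) (e i)‖ ^ 2 ≤ (‖S‖ * ‖T (e i)‖) ^ 2 := by
        have := S.le_opNorm (T (e i))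
        have h0 : (0:ℝ) ≤ ‖S (T (e i))‖ := norm_nonneg _
        simp only [ContinuousLinearMap.comp_apply]
        nlinarith
    _ = ‖S‖ ^ 2 * ‖T (e i)‖ ^ 2 := by ring

lemma IsHilbertSchmidt.adjoint [CompleteSpace E] [CompleteSpace F] {T : E →L[ℂ] F}
    (hT : IsHilbertSchmidt T) : IsHilbertSchmidt (ContinuousLinearMap.adjoint T) := by
  obtain ⟨w, e, -⟩ := exists_hilbertBasis ℂ E
  obtain ⟨v, f, -⟩ := exists_hilbertBasis ℂ F
  rw [isHilbertSchmidt_iff_ensum _ f, ← ensum_eq_adjoint T e f]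
  exact (isHilbertSchmidt_iff_ensum T e).mp hT

lemma IsHilbertSchmidt.comp_right [CompleteSpace E] [CompleteSpace F] [CompleteSpace G]
    {T : F →L[ℂ] G} (hT : IsHilbertSchmidt T) (S : E →L[ℂ] F) :
    IsHilbertSchmidt (T.comp S) := by
  have h1 : IsHilbertSchmidt
      ((ContinuousLinearMap.adjoint S).comp (ContinuousLinearMap.adjoint T)) :=
    hT.adjoint.comp_left _
  have h2 := h1.adjoint
  rwa [ContinuousLinearMap.adjoint_comp, ContinuousLinearMap.adjoint_adjoint,
    ContinuousLinearMap.adjoint_adjoint] at h2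

lemma IsHilbertSchmidt.add [CompleteSpace E] [CompleteSpace F] {T S : E →L[ℂ] F}
    (hT : IsHilbertSchmidt T) (hS : IsHilbertSchmidt S) : IsHilbertSchmidt (T + S) := by
  obtain ⟨w, e, -⟩ := exists_hilbertBasis ℂ E
  refine ⟨w, e, ?_⟩
  have h1 := hT.summable_basis e
  have h2 := hS.summable_basis e
  refine Summable.of_nonneg_of_le (fun i => sq_nonneg _) (fun i => ?_) ((h1.add h2).mul_left 2)
  have hle : ‖(T + S) (e i)‖ ≤ ‖T (e i)‖ + ‖S (e i)‖ := by
    simpa using norm_add_le (T (e i)) (S (e i))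
  nlinarith [norm_nonneg ((T + S) (e i)), norm_nonneg (T (e i)), norm_nonneg (S (e i)),
    sq_nonneg (‖T (e i)‖ - ‖S (e i)‖)]

lemma IsHilbertSchmidt.const_smul {T : E →L[ℂ] F}
    (hT : IsHilbertSchmidt T) (c : ℂ) : IsHilbertSchmidt (c • T) := by
  obtain ⟨ι, e, h⟩ := hT
  exact ⟨ι, e, by simpa [norm_smul, mul_pow] using h.mul_left (‖c‖ ^ 2)⟩

lemma IsHilbertSchmidt.neg {T : E →L[ℂ] F}
    (hT : IsHilbertSchmidt T) : IsHilbertSchmidt (-T) := by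
  obtain ⟨ι, e, h⟩ := hT
  exact ⟨ι, e, by simpa using h⟩

lemma isHilbertSchmidt_of_forall_zero [CompleteSpace E] (T : E →L[ℂ] F)
    (h : ∀ x, T x = 0) : IsHilbertSchmidt T := by
  obtain ⟨w, e, -⟩ := exists_hilbertBasis ℂ E
  exact ⟨w, e, by simpa [h] using summable_zero⟩

end HSAux

variable {H : Type} [NormedAddCommGroup H] [InnerProductSpace ℂ H] [CompleteSpace H]

/-- The block `b : H₋ → H₊` of a bounded operator `A` on a polarized Hilbert space
`H = H₊ ⊕ H₋`, i.e. `pr₊ ∘ A` restricted to `H₋`. -/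
noncomputable def offBlock (Hp Hm : Submodule ℂ H) [CompleteSpace Hp]
    (A : H →L[ℂ] H) : Hm →L[ℂ] Hp :=
  (Hp.orthogonalProjection).comp (A.comp Hm.subtypeL)

noncomputable section BlockAux

/-- The symmetry `J = P₊ - P₋` of the polarization. -/
noncomputable def Jop (K : Submodule ℂ H) [CompleteSpace K] : H →L[ℂ] H :=
  K.subtypeL.comp (Submodule.orthogonalProjection K) - Kᗮ.subtypeL.comp (Submodule.orthogonalProjection Kᗮ)

variable (K : Submodule ℂ H) [CompleteSpace K]

lemma Jop_apply_p (u : K) : Jop K (u : H) = (u : H) := by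
  simp [Jop, Submodule.orthogonalProjection_mem_subspace_eq_self,
    Submodule.orthogonalProjectionOnto_apply_of_mem_orthogonal
      (K.le_orthogonal_orthogonal u.2)]

lemma Jop_apply_m (v : Kᗮ) : Jop K (v : H) = -(v : H) := by
  simp [Jop, Submodule.orthogonalProjection_mem_subspace_eq_self,
    Submodule.orthogonalProjectionOnto_apply_of_mem_orthogonal v.2]

lemma proj_Jop (y : H) :
    Submodule.orthogonalProjection K (Jop K y) = Submodule.orthogonalProjection K y := by
  have hy : K.orthogonalProjectionOnto (K.starProjection y) = K.orthogonalProjectionOnto y :=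
    K.orthogonalProjectionOnto_mem_subspace_eq_self (K.orthogonalProjectionOnto y)
  simp [Jop, Submodule.orthogonalProjection, Submodule.orthogonalProjection_mem_subspace_eq_self,
    Submodule.orthogonalProjectionOnto_apply_of_mem_orthogonal
      (Submodule.orthogonalProjection Kᗮ y).2, hy]

lemma proj_orth_Jop (y : H) :
    Submodule.orthogonalProjection Kᗮ (Jop K y) = -Submodule.orthogonalProjection Kᗮ y := by
  simp [Jop, Submodule.orthogonalProjection, Submodule.orthogonalProjection_mem_subspace_eq_self,
    Submodule.orthogonalProjectionOnto_apply_of_mem_orthogonal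
      (K.le_orthogonal_orthogonal (Submodule.orthogonalProjection K y).2),
    (Submodule.orthogonalProjectionOnto_orthogonal_apply_eq_zero (K.starProjection_apply_mem y) :
      Kᗮ.orthogonalProjectionOnto (K.starProjection y) = 0)]

/-- The commutator `[J, A]`. -/
noncomputable def commJ (A : H →L[ℂ] H) : H →L[ℂ] H :=
  (Jop K).comp A - A.comp (Jop K)

lemma offBlock_commJ_p (A : H →L[ℂ] H) :
    offBlock K Kᗮ (commJ K A) = (2 : ℂ) • offBlock K Kᗮ A := by
  ext v
  simp only [offBlock, commJ, ContinuousLinearMap.comp_apply, ContinuousLinearMap.sub_apply,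
    ContinuousLinearMap.smul_apply, Submodule.subtypeL_apply, map_sub]
  rw [proj_Jop, Jop_apply_m, map_neg, map_neg]
  rw [two_smul]
  abel

lemma offBlock_commJ_m (A : H →L[ℂ] H) :
    offBlock Kᗮ K (commJ K A) = (-2 : ℂ) • offBlock Kᗮ K A := by
  ext u
  simp only [offBlock, commJ, ContinuousLinearMap.comp_apply, ContinuousLinearMap.sub_apply,
    ContinuousLinearMap.smul_apply, Submodule.subtypeL_apply, map_sub]
  rw [proj_orth_Jop, Jop_apply_p]
  rw [show (-2 : ℂ) • (Submodule.orthogonalProjection Kᗮ) (A ↑u)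
      = -((2:ℂ) • (Submodule.orthogonalProjection Kᗮ) (A ↑u)) by simp, two_smul]
  abel

lemma commJ_diag_p (A : H →L[ℂ] H) (u : K) :
    Submodule.orthogonalProjection K (commJ K A (u : H)) = 0 := by
  simp only [commJ, ContinuousLinearMap.comp_apply, ContinuousLinearMap.sub_apply]
  rw [map_sub, proj_Jop, Jop_apply_p]
  simp

lemma commJ_diag_m (A : H →L[ℂ] H) (v : Kᗮ) :
    Submodule.orthogonalProjection Kᗮ (commJ K A (v : H)) = 0 := by
  simp only [commJ, ContinuousLinearMap.comp_apply, ContinuousLinearMap.sub_apply]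
  rw [map_sub, proj_orth_Jop, Jop_apply_m]
  simp

lemma offBlock_isHS (K1 K2 : Submodule ℂ H) [CompleteSpace K1] [CompleteSpace K2]
    {T : H →L[ℂ] H} (h : IsHilbertSchmidt T) : IsHilbertSchmidt (offBlock K1 K2 T) :=
  (h.comp_right K2.subtypeL).comp_left (Submodule.orthogonalProjection K1)

lemma hs_of_blocks [CompleteSpace Kᗮ] (T : H →L[ℂ] H)
    (hdp : ∀ u : K, Submodule.orthogonalProjection K (T (u : H)) = 0)
    (hdm : ∀ v : Kᗮ, Submodule.orthogonalProjection Kᗮ (T (v : H)) = 0)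
    (h1 : IsHilbertSchmidt (offBlock K Kᗮ T)) (h2 : IsHilbertSchmidt (offBlock Kᗮ K T)) :
    IsHilbertSchmidt T := by
  have hdecomp : T = K.subtypeL.comp ((offBlock K Kᗮ T).comp (Submodule.orthogonalProjection Kᗮ))
      + Kᗮ.subtypeL.comp ((offBlock Kᗮ K T).comp (Submodule.orthogonalProjection K)) := by
    ext x
    conv_lhs => rw [← (show (Submodule.orthogonalProjection K x : H) + (Submodule.orthogonalProjection Kᗮ x : H) = x from K.starProjection_add_starProjection_orthogonal _)]
    rw [map_add]
    have e1 : T ((Submodule.orthogonalProjection K x : H))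
        = (Submodule.orthogonalProjection Kᗮ (T (Submodule.orthogonalProjection K x : H)) : H) := by
      conv_lhs => rw [← (show (Submodule.orthogonalProjection K (T (Submodule.orthogonalProjection K x : H)) : H)
          + (Submodule.orthogonalProjection Kᗮ (T (Submodule.orthogonalProjection K x : H)) : H)
          = T (Submodule.orthogonalProjection K x : H) from K.starProjection_add_starProjection_orthogonal _)]
      rw [hdp (Submodule.orthogonalProjection K x)]
      simp
    have e2 : T ((Submodule.orthogonalProjection Kᗮ x : H))
        = (Submodule.orthogonalProjection K (T (Submodule.orthogonalProjection Kᗮ x : H)) : H) := by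
      conv_lhs => rw [← (show (Submodule.orthogonalProjection K (T (Submodule.orthogonalProjection Kᗮ x : H)) : H)
          + (Submodule.orthogonalProjection Kᗮ (T (Submodule.orthogonalProjection Kᗮ x : H)) : H)
          = T (Submodule.orthogonalProjection Kᗮ x : H) from K.starProjection_add_starProjection_orthogonal _)]
      rw [hdm (Submodule.orthogonalProjection Kᗮ x)]
      simp
    rw [e1, e2]
    simp only [ContinuousLinearMap.add_apply, ContinuousLinearMap.comp_apply,
      Submodule.subtypeL_apply, offBlock]
    abel
  rw [hdecomp]
  exact ((h1.comp_right _).comp_left _).add ((h2.comp_right _).comp_left _)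

end BlockAux

/-- An invertible bounded operator on the polarized space `H = H₊ ⊕ H₋` belongs to `GL_HS(H)`
if both off-diagonal blocks are Hilbert–Schmidt. -/
def memGLHS (Hp Hm : Submodule ℂ H) [CompleteSpace Hp] [CompleteSpace Hm]
    (A : H ≃L[ℂ] H) : Prop :=
  IsHilbertSchmidt (offBlock Hp Hm (A : H →L[ℂ] H)) ∧
  IsHilbertSchmidt (offBlock Hm Hp (A : H →L[ℂ] H))

/-- Let `H = H₊ ⊕ H₋` be a polarized Hilbert space (orthogonal decomposition
into closed infinite-dimensional subspaces) and `A` a bounded invertible operator on `H` whose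
off-diagonal blocks are Hilbert–Schmidt. Then the off-diagonal blocks of `A⁻¹` are also
Hilbert–Schmidt; consequently `GL_HS(H)` is a group under composition (it contains the
identity and is closed under composition and inversion). -/
theorem inverse_offdiagonal_hilbertSchmidt_and_GLHS_group
    (Hp Hm : Submodule ℂ H) [CompleteSpace Hp] [CompleteSpace Hm]
    (hperp : Hm = Hpᗮ) (hip : ¬ FiniteDimensional ℂ Hp) (him : ¬ FiniteDimensional ℂ Hm)
    (A : H ≃L[ℂ] H) (hA : memGLHS Hp Hm A) :
    memGLHS Hp Hm A.symm ∧
    memGLHS Hp Hm (ContinuousLinearEquiv.refl ℂ H) ∧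
    (∀ B C : H ≃L[ℂ] H, memGLHS Hp Hm B → memGLHS Hp Hm C → memGLHS Hp Hm (B.trans C)) := by
  subst hperp
  have key : ∀ B : H ≃L[ℂ] H, memGLHS Hp Hpᗮ B →
      IsHilbertSchmidt (commJ Hp (B : H →L[ℂ] H)) := by
    intro B hB
    refine hs_of_blocks Hp _ (commJ_diag_p Hp _) (commJ_diag_m Hp _) ?_ ?_
    · rw [offBlock_commJ_p]; exact hB.1.const_smul _
    · rw [offBlock_commJ_m]; exact hB.2.const_smul _
  have key2 : ∀ B : H ≃L[ℂ] H,
      IsHilbertSchmidt (commJ Hp (B : H →L[ℂ] H)) → memGLHS Hp Hpᗮ B := by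
    intro B h
    constructor
    · have h1 := offBlock_isHS Hp Hpᗮ h
      rw [offBlock_commJ_p] at h1
      have h2 := h1.const_smul ((2 : ℂ)⁻¹)
      rwa [smul_smul, inv_mul_cancel₀ (two_ne_zero), one_smul] at h2
    · have h1 := offBlock_isHS Hpᗮ Hp h
      rw [offBlock_commJ_m] at h1
      have h2 := h1.const_smul ((-2 : ℂ)⁻¹)
      rwa [smul_smul, inv_mul_cancel₀ (by norm_num : (-2 : ℂ) ≠ 0), one_smul] at h2
  refine ⟨?_, ?_, ?_⟩
  · apply key2
    have h := key A hA
    have hcomm : commJ Hp (A.symm : H →L[ℂ] H)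
        = -((A.symm : H →L[ℂ] H).comp ((commJ Hp (A : H →L[ℂ] H)).comp
            (A.symm : H →L[ℂ] H))) := by
      ext x
      simp only [commJ, ContinuousLinearMap.comp_apply, ContinuousLinearMap.sub_apply,
        ContinuousLinearMap.neg_apply, ContinuousLinearEquiv.coe_coe, map_sub,
        ContinuousLinearEquiv.apply_symm_apply, ContinuousLinearEquiv.symm_apply_apply]
      abel
    rw [hcomm]
    exact ((h.comp_right _).comp_left _).neg
  · apply key2
    apply isHilbertSchmidt_of_forall_zero
    intro x
    simp [commJ]
  · intro B C hB hC
    apply key2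
    have hcomm : commJ Hp ((B.trans C : H ≃L[ℂ] H) : H →L[ℂ] H)
        = (commJ Hp (C : H →L[ℂ] H)).comp (B : H →L[ℂ] H)
          + (C : H →L[ℂ] H).comp (commJ Hp (B : H →L[ℂ] H)) := by
      ext x
      simp only [commJ, ContinuousLinearMap.comp_apply, ContinuousLinearMap.sub_apply,
        ContinuousLinearMap.add_apply, ContinuousLinearEquiv.coe_coe,
        ContinuousLinearEquiv.trans_apply, map_sub]
      abel
    rw [hcomm]
    exact ((key C hC).comp_right _).add ((key B hB).comp_left _)
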